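/- If u(I) ∈ (0,1) solves (λ/μ) Σ_{i=1}^I u^i = 1 and P_I := Σ_{i=1}^{I-1} (1/i) u(I)^i (1 − u(I)) + (1/I) u(I)^I, then P_I → −(λ/(λ+μ)) ln(λ/(λ+μ)) as I → ∞. -/

import Mathlib

open Set Filter Topology

private lemma geom_Icc (x : ℝ) (I : ℕ) :
    (1 - x) * ∑ i ∈ Finset.Icc 1 I, x ^ i = x * (1 - x ^ I) := by
  induction I with
  | zero => simp
  | succ n ih =>
      rw [Finset.sum_Icc_succ_top (by omega), mul_add, ih]
      ring

private lemma err_bound (v : ℝ) (hv0 : 0 < v) (hv1 : v < 1) (I : ℕ) (hI : 1 ≤ I) :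
    |((∑ i ∈ Finset.Icc 1 (I - 1), (1 / (i : ℝ)) * v ^ i * (1 - v))
        + (1 / (I : ℝ)) * v ^ I) - (-(1 - v) * Real.log (1 - v))| ≤ v ^ I / I := by
  set K := I - 1 with hKdef
  have hK : K + 1 = I := by omega
  have hIR : (0 : ℝ) < I := by exact_mod_cast Nat.lt_of_lt_of_le Nat.zero_lt_one hI
  have hs : HasSum (fun n : ℕ => v ^ (n + 1) / ((n : ℝ) + 1)) (-Real.log (1 - v)) :=
    Real.hasSum_pow_div_log_of_abs_lt_one (by rw [abs_of_pos hv0]; exact hv1)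
  set P : ℝ := ∑ n ∈ Finset.range K, v ^ (n + 1) / ((n : ℝ) + 1) with hPdef
  have hsum : ∑ i ∈ Finset.Icc 1 K, (1 / (i : ℝ)) * v ^ i * (1 - v) = (1 - v) * P := by
    rw [hPdef, Finset.mul_sum, ← Finset.Ico_add_one_right_eq_Icc, Finset.sum_Ico_eq_sum_range,
      Nat.add_sub_cancel]
    refine Finset.sum_congr rfl fun n _ => ?_
    push_cast
    ring
  have htail : HasSum (fun n : ℕ => v ^ (n + K + 1) / ((↑(n + K) : ℝ) + 1))
      (-Real.log (1 - v) - P) := (hasSum_nat_add_iff' K).mpr hs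
  set T : ℝ := -Real.log (1 - v) - P with hTdef
  have hgeom : HasSum (fun n : ℕ => (v ^ I / I) * v ^ n) ((v ^ I / I) * (1 - v)⁻¹) :=
    (hasSum_geometric_of_lt_one hv0.le hv1).mul_left _
  have hT0 : 0 ≤ T := by
    refine hasSum_le (fun n => ?_) hasSum_zero htail
    positivity
  have hT1 : T ≤ v ^ I / I * (1 - v)⁻¹ := by
    refine hasSum_le (fun n => ?_) htail hgeom
    have hrw : v ^ I / ↑I * v ^ n = v ^ (n + K + 1) / ↑I := by
      rw [show n + K + 1 = I + n from by omega, pow_add]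
      ring
    rw [hrw]
    gcongr
    · exact_mod_cast (show I ≤ n + K + 1 by omega)
  have hvpos : (0 : ℝ) < 1 - v := by linarith
  have hT2 : (1 - v) * T ≤ v ^ I / I := by
    have h := mul_le_mul_of_nonneg_left hT1 hvpos.le
    have heq : (1 - v) * (v ^ I / I * (1 - v)⁻¹) = v ^ I / I := by
      field_simp
    rw [heq] at h
    exact h
  have hT3 : 0 ≤ (1 - v) * T := mul_nonneg hvpos.le hT0
  have key : (∑ i ∈ Finset.Icc 1 K, (1 / (i : ℝ)) * v ^ i * (1 - v))
      + (1 / (I : ℝ)) * v ^ I - (-(1 - v) * Real.log (1 - v))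
      = v ^ I / I - (1 - v) * T := by
    have hlog : -Real.log (1 - v) = P + T := by rw [hTdef]; ring
    have : -(1 - v) * Real.log (1 - v) = (1 - v) * (P + T) := by
      rw [← hlog]; ring
    rw [hsum, this]
    ring
  have hvII : (0:ℝ) ≤ v ^ I / I := by positivity
  rw [key, abs_le]
  exact ⟨by linarith, sub_le_self _ hT3⟩

/-- if `u(I) ∈ (0,1)` solves `(λ/μ) ∑_{i=1}^I u^i = 1` and
`P_I = ∑_{i=1}^{I-1} (1/i) u(I)^i (1−u(I)) + (1/I) u(I)^I`, then
`P_I → −(λ/(λ+μ)) ln(λ/(λ+μ))` as `I → ∞`. -/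
theorem freelancer_prob_tendsto (lam mu : ℝ) (hlam : 0 < lam) (hmu : 0 < mu)
    (u : ℕ → ℝ)
    (hu : ∀ I : ℕ, 1 ≤ I → 1 < lam * I / mu →
      u I ∈ Set.Ioo (0 : ℝ) 1 ∧ (lam / mu) * ∑ i ∈ Finset.Icc 1 I, u I ^ i = 1) :
    Tendsto
      (fun I : ℕ =>
        (∑ i ∈ Finset.Icc 1 (I - 1), (1 / (i : ℝ)) * u I ^ i * (1 - u I))
          + (1 / (I : ℝ)) * u I ^ I)
      atTop (nhds (-(lam / (lam + mu)) * Real.log (lam / (lam + mu)))) := by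
  have ha0 : 0 < lam / mu := div_pos hlam hmu
  set a := lam / mu with ha
  have h1a : 0 < 1 + a := by linarith
  set ust : ℝ := 1 / (1 + a) with hust
  have htarget : lam / (lam + mu) = 1 - ust := by
    have hlm : lam + mu ≠ 0 := by positivity
    rw [hust, ha]
    field_simp
    ring
  have hlmpos : 0 < lam / (lam + mu) := div_pos hlam (by linarith)
  -- eventual facts
  have hev : ∀ᶠ I : ℕ in atTop,
      0 < u I ∧ u I < 1 ∧ ust ≤ u I ∧ u I ≤ (1 + 1 / (I : ℝ)) / (1 + a)
        ∧ (u I) ^ I ≤ 1 / (a * I) ∧ 1 ≤ I := by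
    filter_upwards [eventually_ge_atTop (⌈mu / lam⌉₊ + 1)] with I hIN
    have hI1 : 1 ≤ I := le_trans (Nat.le_add_left 1 _) hIN
    have hIR : (0 : ℝ) < I := by exact_mod_cast Nat.lt_of_lt_of_le Nat.zero_lt_one hI1
    have hml : mu / lam < I := by
      have h1 : (⌈mu / lam⌉₊ : ℝ) < I := by
        exact_mod_cast Nat.lt_of_lt_of_le (Nat.lt_succ_self _) hIN
      exact lt_of_le_of_lt (Nat.le_ceil _) h1
    have hcond : 1 < lam * I / mu := by
      rw [lt_div_iff₀ hmu, one_mul]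
      calc mu = lam * (mu / lam) := by field_simp
        _ < lam * I := mul_lt_mul_of_pos_left hml hlam
    obtain ⟨⟨hv0, hv1⟩, heq⟩ := hu I hI1 hcond
    set v := u I with hv
    set S := ∑ i ∈ Finset.Icc 1 I, v ^ i with hS
    have hgeom : (1 - v) * S = v * (1 - v ^ I) := geom_Icc v I
    have hSa : a * S = 1 := heq
    have hIv : (I : ℝ) * v ^ I ≤ S := by
      have h := Finset.card_nsmul_le_sum (Finset.Icc 1 I) (fun i => v ^ i) (v ^ I)
        (fun i hi => pow_le_pow_of_le_one hv0.le hv1.le (Finset.mem_Icc.mp hi).2)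
      rwa [Nat.card_Icc, Nat.add_sub_cancel, nsmul_eq_mul] at h
    have hP4 : v ^ I ≤ 1 / (a * I) := by
      rw [le_div_iff₀ (by positivity)]
      nlinarith [mul_le_mul_of_nonneg_left hIv ha0.le]
    have hkey : 1 - v = a * (v * (1 - v ^ I)) := by
      linear_combination a * hgeom - (1 - v) * hSa
    have hvI0 : 0 ≤ v ^ I := pow_nonneg hv0.le I
    have hP1 : ust ≤ v := by
      rw [hust, div_le_iff₀ h1a]
      nlinarith [mul_nonneg (mul_nonneg ha0.le hv0.le) hvI0]
    have hP2 : v ≤ (1 + 1 / (I : ℝ)) / (1 + a) := by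
      rw [le_div_iff₀ h1a]
      have h5 : a * (v * v ^ I) ≤ a * v ^ I :=
        mul_le_mul_of_nonneg_left (mul_le_of_le_one_left hvI0 hv1.le) ha0.le
      have h6 : a * v ^ I ≤ 1 / (I : ℝ) := by
        have := mul_le_mul_of_nonneg_left hP4 ha0.le
        have heq2 : a * (1 / (a * I)) = 1 / (I : ℝ) := by
          field_simp
        rw [heq2] at this
        exact this
      nlinarith
    exact ⟨hv0, hv1, hP1, hP2, hP4, hI1⟩
  -- u tends to ust
  have hu_t : Tendsto u atTop (nhds ust) := by
    have hup : Tendsto (fun I : ℕ => (1 + 1 / (I : ℝ)) / (1 + a)) atTop (nhds ust) := by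
      have h := ((tendsto_const_nhds (x := (1:ℝ)) (f := atTop (α := ℕ))).add
        tendsto_one_div_atTop_nhds_zero_nat).div_const (1 + a)
      have : ((1 : ℝ) + 0) / (1 + a) = ust := by rw [hust]; norm_num
      rwa [this] at h
    refine tendsto_of_tendsto_of_tendsto_of_le_of_le' tendsto_const_nhds hup ?_ ?_
    · filter_upwards [hev] with I h; exact h.2.2.1
    · filter_upwards [hev] with I h; exact h.2.2.2.1
  -- continuity step
  have hg : Tendsto (fun I : ℕ => -(1 - u I) * Real.log (1 - u I)) atTop
      (nhds (-(lam / (lam + mu)) * Real.log (lam / (lam + mu)))) := by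
    have h1 : ContinuousAt (fun x : ℝ => 1 - x) ust := continuousAt_const.sub continuousAt_id
    have hne : (1 : ℝ) - ust ≠ 0 := by rw [← htarget]; exact ne_of_gt hlmpos
    have h2 : ContinuousAt Real.log (1 - ust) := Real.continuousAt_log hne
    have hc : ContinuousAt (fun x : ℝ => -(1 - x) * Real.log (1 - x)) ust :=
      h1.neg.mul (h2.comp h1)
    have := hc.tendsto.comp hu_t
    rw [htarget]
    simpa [Function.comp_def] using this
  -- error term tends to 0
  have herr : Tendsto (fun I : ℕ =>
      ((∑ i ∈ Finset.Icc 1 (I - 1), (1 / (i : ℝ)) * u I ^ i * (1 - u I))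
          + (1 / (I : ℝ)) * u I ^ I) - (-(1 - u I) * Real.log (1 - u I)))
      atTop (nhds 0) := by
    apply squeeze_zero_norm' (a := fun I : ℕ => (1 / a) * (1 / (I : ℝ)))
    · filter_upwards [hev] with I h
      obtain ⟨h0, h1, _, _, h4, hI1⟩ := h
      have hIR : (1 : ℝ) ≤ I := by exact_mod_cast hI1
      have hb := err_bound (u I) h0 h1 I hI1
      have hstep : u I ^ I / I ≤ (1 / a) * (1 / (I : ℝ)) := by
        have h7 : u I ^ I / I ≤ 1 / (a * I) :=
          le_trans (div_le_self (pow_nonneg h0.le I) hIR) h4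
        have h8 : (1 : ℝ) / (a * I) = (1 / a) * (1 / (I : ℝ)) := by ring
        rw [← h8]; exact h7
      rw [Real.norm_eq_abs]
      exact le_trans hb hstep
    · have h := tendsto_one_div_atTop_nhds_zero_nat.const_mul (1 / a)
      simpa using h
  have hsum := hg.add herr
  rw [add_zero] at hsum
  exact hsum.congr fun I => by ring
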